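/- arXiv:1508.02968 — 5 statements merged into one kernel-verified Lean document; each statement's English description precedes it below -/
import Mathlib

section
/- If W is a right-maximal substring of T and V is a nonempty proper border of W, then V is right-maximal in T. Similarly, if W is left-maximal then V is left-maximal, and if W is a maximal repeat of T then V is a maximal repeat of T. -/
open List

variable {α : Type*} [DecidableEq α]

/-- Set of starting positions of occurrences of `W` in `T`. -/
def occSet (T W : List α) : Finset ℕ :=
  (Finset.range (T.length + 1)).filter (fun i => (T.drop i).take W.length = W)

/-- Number of occurrences of `W` in `T`. -/
def fT (T W : List α) : ℕ := (occSet T W).card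

/-- Number of occurrences of `W` in the circular version of `T`. -/
def fC (T W : List α) : ℕ :=
  ((Finset.range T.length).filter (fun i => ((T ++ T).drop i).take W.length = W)).card

/-- Lengths of proper borders of `W`. -/
def borders (W : List α) : Finset ℕ :=
  (Finset.Ioo 0 W.length).filter (fun b => W.take b <:+ W)

/-- Length of the longest proper border of `W` (0 if none). -/
def bord (W : List α) : ℕ := (borders W).sup id

/-- `a|W`: length of the longest proper border of `W` preceded by `a`
when it occurs as a suffix of `W` (0 if none). -/
def bordPre (a : α) (W : List α) : ℕ :=
  ((borders W).filter (fun b => W[W.length - b - 1]? = some a)).sup id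

/-- `W|b`: length of the longest proper border of `W` followed by `b`
when it occurs as a prefix of `W` (0 if none). -/
def bordFol (b : α) (W : List α) : ℕ :=
  ((borders W).filter (fun p => W[p]? = some b)).sup id

/-- `V` is a nonempty proper border of `W`. -/
def IsProperBorder (V W : List α) : Prop :=
  V ≠ [] ∧ V.length < W.length ∧ V <+: W ∧ V <:+ W

/-- `W` is right-maximal in `T`. -/
def IsRightMax (T W : List α) : Prop :=
  ∃ b c : α, b ≠ c ∧ (W ++ [b]) <:+: T ∧ (W ++ [c]) <:+: T

/-- `W` is left-maximal in `T`. -/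
def IsLeftMax (T W : List α) : Prop :=
  ∃ b c : α, b ≠ c ∧ (b :: W) <:+: T ∧ (c :: W) <:+: T

/-- `W` is a maximal repeat of `T`. -/
def IsMaxRepeat (T W : List α) : Prop :=
  1 < fT T W ∧ IsLeftMax T W ∧ IsRightMax T W

/-- borders inherit right-maximality, left-maximality and
maximal-repeatness. -/
theorem border_inherits_maximality (T W V : List α) (hV : IsProperBorder V W) :
    (IsRightMax T W → IsRightMax T V) ∧
    (IsLeftMax T W → IsLeftMax T V) ∧
    (IsMaxRepeat T W → IsMaxRepeat T V) := by
  obtain ⟨hne, hlt, hpre, hsuf⟩ := hV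
  have hR : IsRightMax T W → IsRightMax T V := by
    rintro ⟨b, c, hbc, hb, hc⟩
    obtain ⟨t, ht⟩ := hsuf
    have hsfx : ∀ x : α, (V ++ [x]) <:+ (W ++ [x]) := fun x =>
      ⟨t, by rw [← List.append_assoc, ht]⟩
    exact ⟨b, c, hbc, ((hsfx b).isInfix).trans hb, ((hsfx c).isInfix).trans hc⟩
  have hL : IsLeftMax T W → IsLeftMax T V := by
    rintro ⟨b, c, hbc, hb, hc⟩
    obtain ⟨t, ht⟩ := hpre
    have hpfx : ∀ x : α, (x :: V) <+: (x :: W) := fun x =>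
      ⟨t, by rw [List.cons_append, ht]⟩
    exact ⟨b, c, hbc, ((hpfx b).isInfix).trans hb, ((hpfx c).isInfix).trans hc⟩
  refine ⟨hR, hL, ?_⟩
  rintro ⟨hcard, hl, hr⟩
  have hsub : occSet T W ⊆ occSet T V := by
    intro i hi
    simp only [occSet, Finset.mem_filter, Finset.mem_range] at hi ⊢
    obtain ⟨h1, h2⟩ := hi
    refine ⟨h1, ?_⟩
    calc (T.drop i).take V.length
        = ((T.drop i).take W.length).take V.length := by
          rw [List.take_take, min_eq_left hlt.le]
      _ = W.take V.length := by rw [h2]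
      _ = V := (List.prefix_iff_eq_take.mp hpre).symm
  exact ⟨lt_of_lt_of_le hcard (Finset.card_le_card hsub), hL hl, hR hr⟩
end

section
/- Let T be a trie with vertex set V over alphabet [1..σ], where ℓ(v) denotes the reversed label of the path from the root to v. For v ∈ V and character a, define a|v to be the node w ∈ V (if it exists) whose label ℓ(w) equals the longest border of ℓ(v) that is preceded by character a when occurring as a suffix of ℓ(v). Then the set of return arcs E' = {(v, a|v) : v ∈ V, a ∈ [1..σ], a|v exists and is not the root} has cardinality at most 2|V|. -/
open List

variable {α : Type*} [DecidableEq α]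

/- ### Auxiliary material for STATEMENT 8 -/

lemma mem_borders_bounds {b : ℕ} {A : List α} (h : b ∈ borders A) :
    0 < b ∧ b < A.length := by
  rw [borders, Finset.mem_filter, Finset.mem_Ioo] at h
  exact ⟨h.1.1, h.1.2⟩

lemma borders_nil : borders ([] : List α) = ∅ := by
  simp [borders]

lemma suffix_of_suffix_cons {c : α} {l A : List α} (h : l <:+ c :: A)
    (hl : l.length ≤ A.length) : l <:+ A := by
  obtain ⟨t, ht⟩ := h
  cases t with
  | nil =>
    simp at ht
    subst ht
    simp at hl
  | cons c' t' =>
    simp only [List.cons_append, List.cons.injEq] at ht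
    exact ⟨t', ht.2⟩

lemma suffix_eq_drop {l A : List α} (h : l <:+ A) :
    A.drop (A.length - l.length) = l := by
  obtain ⟨t, ht⟩ := h
  subst ht
  have h1 : (t ++ l).length - l.length = t.length := by simp
  rw [h1, List.drop_left]

/-- The borders of `c :: A` are precisely `p + 1` for `p` a border of `A`
(or `p = 0`) such that the suffix occurrence of `A.take p` in `A` is
preceded by the character `c`. -/
lemma borders_cons (c : α) (A : List α) :
    borders (c :: A) =
      ((insert 0 (borders A)).filter
        (fun p => A[A.length - p - 1]? = some c)).image (· + 1) := by
  ext q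
  simp only [borders, Finset.mem_image, Finset.mem_filter, Finset.mem_Ioo,
    Finset.mem_insert, List.length_cons]
  constructor
  · rintro ⟨⟨hq0, hqn⟩, hsuf⟩
    obtain ⟨p, rfl⟩ : ∃ p, q = p + 1 := ⟨q - 1, by omega⟩
    have hpA : p < A.length := by omega
    rw [List.take_succ_cons] at hsuf
    have hsA : c :: A.take p <:+ A := by
      apply suffix_of_suffix_cons hsuf
      simp only [List.length_cons, List.length_take]
      omega
    obtain ⟨t, ht⟩ := hsA
    have hlen : A.length = t.length + 1 + p := by
      have h' := congrArg List.length ht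
      simp only [List.length_append, List.length_cons, List.length_take,
        Nat.min_eq_left hpA.le] at h'
      omega
    have hget : A[A.length - p - 1]? = some c := by
      have he : A.length - p - 1 = t.length := by omega
      rw [he, ← ht, List.getElem?_append_right le_rfl]
      simp
    have hsuffp : A.take p <:+ A := ⟨t ++ [c], by simpa using ht⟩
    refine ⟨p, ⟨?_, hget⟩, rfl⟩
    rcases Nat.eq_zero_or_pos p with rfl | hp0
    · exact Or.inl rfl
    · exact Or.inr ⟨⟨hp0, hpA⟩, hsuffp⟩
  · rintro ⟨p, ⟨hp, hget⟩, rfl⟩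
    have hn : A.length - p - 1 < A.length := (List.getElem?_eq_some_iff.1 hget).1
    have hpA : p < A.length := by
      rcases hp with rfl | ⟨⟨h1, h2⟩, -⟩
      · omega
      · exact h2
    have hdropp : A.drop (A.length - p) = A.take p := by
      rcases hp with rfl | ⟨⟨h1, h2⟩, hsfx⟩
      · simp
      · have h3 := suffix_eq_drop hsfx
        rwa [List.length_take, Nat.min_eq_left h2.le] at h3
    have hdrop : A.drop (A.length - p - 1) = c :: A.take p := by
      rw [List.drop_eq_getElem_cons hn]
      obtain ⟨h, hg⟩ := List.getElem?_eq_some_iff.1 hget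
      have h1 : A[A.length - p - 1] = c := by
        simpa [List.get_eq_getElem] using hg
      have h2 : A.length - p - 1 + 1 = A.length - p := by omega
      rw [h1, h2, hdropp]
    have hsufc : c :: A.take p <:+ A := hdrop ▸ List.drop_suffix _ _
    refine ⟨⟨by omega, by omega⟩, ?_⟩
    rw [List.take_succ_cons]
    exact hsufc.trans (List.suffix_cons c A)

/-- The set of "preceding characters" of borders of `A`. -/
def Dset (A : List α) : Finset (Option α) :=
  (borders A).image (fun b => A[A.length - b - 1]?)

/-- Number of borders of `A` preceded by the character `c`. -/
def mstat (A : List α) (c : α) : ℕ :=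
  ((borders A).filter (fun b => A[A.length - b - 1]? = some c)).card

lemma Phi_cons_le (c : α) (A : List α) :
    (borders (c :: A)).card ≤ mstat A c + 1 := by
  rw [borders_cons]
  refine le_trans Finset.card_image_le ?_
  rw [Finset.filter_insert]
  split
  · exact Finset.card_insert_le _ _
  · exact Nat.le_succ _

/-- `Fm B` is `mstat A c` when `B = c :: A`, and `0` for the empty list. -/
def Fm : List α → ℕ
  | [] => 0
  | c :: A => mstat A c

lemma Fm_le (B : List α) (hB : B ≠ []) : (borders B).card ≤ Fm B + 1 := by
  cases B with
  | nil => exact absurd rfl hB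
  | cons c A => exact Phi_cons_le c A

/-- Key fiberwise counting inequality at a single node. -/
lemma key_ineq (A : List α) (s : Finset α) :
    (∑ c ∈ s, mstat A c) + (Dset A).card ≤
      (borders A).card + (s.filter (fun c => some c ∈ Dset A)).card := by
  classical
  set f : ℕ → Option α := fun b => A[A.length - b - 1]? with hf
  have hPhi : (borders A).card
      = ∑ o ∈ Dset A, ((borders A).filter (fun b => f b = o)).card :=
    Finset.card_eq_sum_card_fiberwise (fun b hb => Finset.mem_image_of_mem f hb)
  set s₁ := s.filter (fun c => some c ∈ Dset A) with hs₁
  have hsum1 : ∑ c ∈ s₁, mstat A c = ∑ c ∈ s, mstat A c := by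
    rw [hs₁]
    apply Finset.sum_filter_of_ne
    intro c hc hne
    obtain ⟨b, hb⟩ := Finset.card_pos.1 (Nat.pos_of_ne_zero hne)
    rw [Finset.mem_filter] at hb
    exact Finset.mem_image.2 ⟨b, hb.1, hb.2⟩
  have hinj : ∀ x ∈ s₁, ∀ y ∈ s₁, (some x : Option α) = some y → x = y :=
    fun x _ y _ h => Option.some_injective α h
  have hsub : s₁.image some ⊆ Dset A := by
    intro o ho
    obtain ⟨c, hc, rfl⟩ := Finset.mem_image.1 ho
    exact (Finset.mem_filter.1 hc).2
  have hsum2 : ∑ c ∈ s₁, mstat A c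
      = ∑ o ∈ s₁.image some, ((borders A).filter (fun b => f b = o)).card := by
    rw [Finset.sum_image hinj]
    rfl
  have hcard1 : (s₁.image some).card = s₁.card :=
    Finset.card_image_of_injective _ (Option.some_injective α)
  have hsdiff : ∑ o ∈ Dset A \ s₁.image some, ((borders A).filter (fun b => f b = o)).card
      + ∑ o ∈ s₁.image some, ((borders A).filter (fun b => f b = o)).card
      = ∑ o ∈ Dset A, ((borders A).filter (fun b => f b = o)).card :=
    Finset.sum_sdiff hsub
  have hcards : (Dset A \ s₁.image some).card + (s₁.image some).card = (Dset A).card :=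
    Finset.card_sdiff_add_card_eq_card hsub
  have hpos : (Dset A \ s₁.image some).card
      ≤ ∑ o ∈ Dset A \ s₁.image some, ((borders A).filter (fun b => f b = o)).card := by
    rw [Finset.card_eq_sum_ones]
    apply Finset.sum_le_sum
    intro o ho
    have hoD : o ∈ Dset A := (Finset.mem_sdiff.1 ho).1
    obtain ⟨b, hb, hbo⟩ := Finset.mem_image.1 hoD
    exact Finset.card_pos.2 ⟨b, Finset.mem_filter.2 ⟨hb, hbo⟩⟩
  omega

section

variable {α : Type*} [DecidableEq α] [Fintype α]

/-- The amortized bound: summing the number of distinct preceding characters of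
borders over a suffix-closed family is at most twice its size. -/
lemma sum_Dset_le (V : Finset (List α))
    (hsuf : ∀ s ∈ V, ∀ t : List α, t <:+ s → t ∈ V) :
    ∑ A ∈ V, (Dset A).card ≤ 2 * V.card := by
  classical
  set V' := V.filter (fun B => B ≠ []) with hV'
  set CA : List α → Finset α := fun A => Finset.univ.filter (fun c : α => c :: A ∈ V)
    with hCA
  set CH : List α → Finset (List α) := fun A => (CA A).image (fun c => c :: A) with hCH
  have hconsinj : ∀ A : List α, ∀ x ∈ CA A, ∀ y ∈ CA A,
      (x :: A : List α) = y :: A → x = y := by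
    intro A x _ y _ h
    exact (List.cons.injEq _ _ _ _ ▸ h).1
  have hV'eq : V' = V.biUnion CH := by
    ext B
    simp only [hV', hCH, hCA, Finset.mem_filter, Finset.mem_biUnion, Finset.mem_image,
      Finset.mem_univ, true_and]
    constructor
    · rintro ⟨hBV, hBne⟩
      cases B with
      | nil => exact absurd rfl hBne
      | cons c A =>
        exact ⟨A, hsuf _ hBV _ ⟨[c], rfl⟩, c, hBV, rfl⟩
    · rintro ⟨A, hAV, c, hcV, rfl⟩
      exact ⟨hcV, by simp⟩
  have hdisj : ∀ x ∈ V, ∀ y ∈ V, x ≠ y → Disjoint (CH x) (CH y) := by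
    intro x _ y _ hxy
    rw [Finset.disjoint_left]
    rintro B hBx hBy
    obtain ⟨c, -, rfl⟩ := Finset.mem_image.1 hBx
    obtain ⟨c', -, h⟩ := Finset.mem_image.1 hBy
    exact hxy ((List.cons.injEq _ _ _ _ ▸ h).2.symm)
  have hdisj' : (V : Set (List α)).PairwiseDisjoint CH := by
    intro x hx y hy hxy
    exact hdisj x hx y hy hxy
  have hsum_split : ∀ g : List α → ℕ, g [] = 0 → ∑ A ∈ V, g A = ∑ B ∈ V', g B := by
    intro g hg
    rw [hV', ← Finset.sum_filter_add_sum_filter_not V (fun B => B ≠ []) g]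
    have hz : ∑ B ∈ V.filter (fun B => ¬B ≠ []), g B = 0 := by
      apply Finset.sum_eq_zero
      intro B hB
      have hBnil : B = [] := by simpa using (Finset.mem_filter.1 hB).2
      rw [hBnil, hg]
    omega
  have hchild : ∀ g : List α → ℕ,
      ∑ B ∈ V', g B = ∑ A ∈ V, ∑ c ∈ CA A, g (c :: A) := by
    intro g
    rw [hV'eq, Finset.sum_biUnion hdisj']
    refine Finset.sum_congr rfl ?_
    intro A _
    rw [hCH]
    exact Finset.sum_image (hconsinj A)
  have hcardV' : V'.card = ∑ A ∈ V, (CA A).card := by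
    rw [hV'eq, Finset.card_biUnion hdisj]
    refine Finset.sum_congr rfl ?_
    intro A _
    rw [hCH]
    exact Finset.card_image_of_injOn
      (fun x hx y hy h => hconsinj A x hx y hy h)
  -- main chain
  have h1 : ∑ A ∈ V, (borders A).card = ∑ B ∈ V', (borders B).card :=
    hsum_split _ (by simp [borders_nil])
  have h2 : ∑ B ∈ V', (borders B).card ≤ (∑ B ∈ V', Fm B) + V'.card := by
    rw [Finset.card_eq_sum_ones V', ← Finset.sum_add_distrib]
    apply Finset.sum_le_sum
    intro B hB
    rw [hV', Finset.mem_filter] at hB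
    exact Fm_le B hB.2
  have h3 : ∑ B ∈ V', Fm B = ∑ A ∈ V, ∑ c ∈ CA A, mstat A c := hchild Fm
  have h4 : (∑ A ∈ V, ∑ c ∈ CA A, mstat A c) + ∑ A ∈ V, (Dset A).card
      ≤ (∑ A ∈ V, (borders A).card) + ∑ A ∈ V, ((CA A).filter (fun c => some c ∈ Dset A)).card := by
    rw [← Finset.sum_add_distrib, ← Finset.sum_add_distrib]
    apply Finset.sum_le_sum
    intro A _
    exact key_ineq A (CA A)
  have h5 : ∑ A ∈ V, ((CA A).filter (fun c => some c ∈ Dset A)).card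
      ≤ ∑ A ∈ V, (CA A).card :=
    Finset.sum_le_sum (fun A _ => Finset.card_filter_le _ _)
  have h7 : V'.card ≤ V.card := Finset.card_filter_le _ _
  omega

end

lemma bordPre_spec {a : α} {A : List α} (h : 0 < bordPre a A) :
    bordPre a A ∈ borders A ∧
      A[A.length - bordPre a A - 1]? = some a := by
  classical
  set t := (borders A).filter (fun b => A[A.length - b - 1]? = some a) with ht
  have hsup : bordPre a A = t.sup id := by rw [bordPre, ht]
  have hne : t.Nonempty := by
    rcases Finset.eq_empty_or_nonempty t with he | hne
    · rw [hsup, he] at h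
      simp at h
    · exact hne
  obtain ⟨b, hb, hbe⟩ := Finset.exists_mem_eq_sup t hne id
  rw [hsup, hbe]
  exact ⟨(Finset.mem_filter.1 hb).1, (Finset.mem_filter.1 hb).2⟩

/-- a trie is modelled as a finite suffix-closed set of (reversed
path-label) strings; nodes are identified with their labels, so the parent of a
node labelled `c :: s` is the node labelled `s`. The set of return arcs
(v, a|v) whose target is not the root has cardinality at most 2|V|. -/
theorem return_arcs_bound {σ : ℕ} (V : Finset (List (Fin σ)))
    (hsuf : ∀ s ∈ V, ∀ t : List (Fin σ), t <:+ s → t ∈ V) :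
    (V.biUnion (fun A =>
      ((Finset.univ : Finset (Fin σ)).filter (fun a => 0 < bordPre a A)).image
        (fun a => (A, A.take (bordPre a A))))).card ≤ 2 * V.card := by
  classical
  have harc : ∀ A : List (Fin σ),
      (((Finset.univ : Finset (Fin σ)).filter (fun a => 0 < bordPre a A)).image
        (fun a => (A, A.take (bordPre a A)))).card = (Dset A).card := by
    intro A
    have hinj : Set.InjOn (fun a => (A, A.take (bordPre a A)))
        ((Finset.univ : Finset (Fin σ)).filter (fun a => 0 < bordPre a A)) := by
      intro a₁ h₁ a₂ h₂ he
      simp only [Finset.coe_filter, Finset.mem_univ, true_and, Set.mem_setOf_eq] at h₁ h₂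
      obtain ⟨hb₁, hg₁⟩ := bordPre_spec h₁
      obtain ⟨hb₂, hg₂⟩ := bordPre_spec h₂
      have hlt₁ := (mem_borders_bounds hb₁).2
      have hlt₂ := (mem_borders_bounds hb₂).2
      have hsnd : A.take (bordPre a₁ A) = A.take (bordPre a₂ A) := congrArg Prod.snd he
      have hlen := congrArg List.length hsnd
      simp only [List.length_take] at hlen
      have heq : bordPre a₁ A = bordPre a₂ A := by omega
      rw [heq] at hg₁
      exact Option.some_injective _ (hg₁.symm.trans hg₂)
    rw [Finset.card_image_of_injOn hinj,
      ← Finset.card_image_of_injective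
        ((Finset.univ : Finset (Fin σ)).filter (fun a => 0 < bordPre a A))
        (Option.some_injective (Fin σ))]
    congr 1
    ext o
    simp only [Finset.mem_image, Finset.mem_filter, Finset.mem_univ, true_and, Dset]
    constructor
    · rintro ⟨a, ha, rfl⟩
      obtain ⟨hb, hg⟩ := bordPre_spec ha
      exact ⟨_, hb, hg⟩
    · rintro ⟨b, hb, rfl⟩
      have hbd := mem_borders_bounds hb
      have hidx : A.length - b - 1 < A.length := by omega
      refine ⟨A.get ⟨_, hidx⟩, ?_, (List.getElem?_eq_getElem hidx).symm⟩
      have hmem : b ∈ (borders A).filter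
          (fun b' => A[A.length - b' - 1]?
            = some (A.get ⟨A.length - b - 1, hidx⟩)) := by
        refine Finset.mem_filter.2 ⟨hb, ?_⟩
        have hx : A.length - b - 1 = A.length - b - 1 := rfl
        exact List.getElem?_eq_getElem hidx
      have hle := Finset.le_sup (f := id) hmem
      exact lt_of_lt_of_le hbd.1 hle
  have hdisj : ∀ x ∈ V, ∀ y ∈ V, x ≠ y →
      Disjoint
        (((Finset.univ : Finset (Fin σ)).filter (fun a => 0 < bordPre a x)).image
          (fun a => (x, x.take (bordPre a x))))
        (((Finset.univ : Finset (Fin σ)).filter (fun a => 0 < bordPre a y)).image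
          (fun a => (y, y.take (bordPre a y)))) := by
    intro x _ y _ hxy
    rw [Finset.disjoint_left]
    rintro z hzx hzy
    obtain ⟨a, -, rfl⟩ := Finset.mem_image.1 hzx
    obtain ⟨b, -, h⟩ := Finset.mem_image.1 hzy
    exact hxy (congrArg Prod.fst h).symm
  rw [Finset.card_biUnion hdisj]
  exact le_trans (le_of_eq (Finset.sum_congr rfl (fun A _ => harc A)))
    (sum_Dset_le V hsuf)
end

section
/- In the setting of return arcs on a trie, no two distinct type-2 return arcs are charged to the same vertex: if (u1, v1) and (u2, v2) are distinct return arcs such that neither u1 nor u2 has an outgoing trie edge labeled by the respective arc's character, and arc (u_i, v_i) with label a_i is charged to the vertex w_i satisfying ℓ(u_i) = B_i · ℓ(w_i) where B_i is the longest border of ℓ(u_i) preceded by a_i, then w_1 ≠ w_2. -/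
open List

variable {α : Type*} [DecidableEq α]

/-- The sup of a finset of naturals belongs to it when positive. -/
lemma sup_mem_of_pos (s : Finset ℕ) (h : 0 < s.sup id) : s.sup id ∈ s := by
  have hne : s.Nonempty := by
    by_contra h'
    rw [Finset.not_nonempty_iff_eq_empty] at h'
    simp [h'] at h
  obtain ⟨i, hi, he⟩ := Finset.exists_mem_eq_sup s hne id
  rw [he]; exact hi

/-- A word with a border of length `k` is uniquely determined by `k` and
its tail `u.drop k`. -/
lemma unique_bordered {α : Type*} : ∀ k : ℕ, ∀ u₁ u₂ : List α,
    u₁.take k <:+ u₁ → u₂.take k <:+ u₂ → k < u₁.length → k < u₂.length →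
    u₁.drop k = u₂.drop k → u₁ = u₂ := by
  intro k
  induction k using Nat.strong_induction_on with
  | _ k ih =>
    intro u₁ u₂ hb1 hb2 hl1 hl2 hd
    have hlen : u₁.length = u₂.length := by
      have := congrArg List.length hd
      simp only [List.length_drop] at this
      omega
    rcases Nat.eq_zero_or_pos k with hk0 | hkpos
    · subst hk0; simpa using hd
    -- characterize the borders as drops
    have hs1 : u₁.take k = u₁.drop (u₁.length - k) := by
      have := List.suffix_iff_eq_drop.mp hb1
      rwa [List.length_take, min_eq_left hl1.le] at this
    have hs2 : u₂.take k = u₂.drop (u₂.length - k) := by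
      have := List.suffix_iff_eq_drop.mp hb2
      rwa [List.length_take, min_eq_left hl2.le] at this
    suffices htk : u₁.take k = u₂.take k by
      have := List.take_append_drop k u₁
      rw [htk, hd, List.take_append_drop] at this
      exact this.symm
    rcases le_or_gt k (u₁.length - k) with hkn | hkn
    · -- short border: the border lies inside the common tail
      have e1 : u₁.take k = (u₁.drop k).drop (u₁.length - k - k) := by
        rw [List.drop_drop, hs1]; congr 1; omega
      have e2 : u₂.take k = (u₂.drop k).drop (u₂.length - k - k) := by
        rw [List.drop_drop, hs2]; congr 1; omega
      rw [e1, e2, hd, hlen]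
    · -- long border: recurse on the border itself
      set n := u₁.length - k with hn
      have hn2 : u₂.length - k = n := by omega
      have hnpos : 0 < n := by omega
      have hB1 : u₁.drop n = u₁.take k := by rw [hs1]
      have hB2 : u₂.drop n = u₂.take k := by rw [hs2, hn2]
      have hlen1 : (u₁.take k).length = k := by
        rw [List.length_take]; omega
      have hlen2 : (u₂.take k).length = k := by
        rw [List.length_take]; omega
      have hbb1 : (u₁.take k).take (k - n) <:+ u₁.take k := by
        have : (u₁.take k).drop n = (u₁.take k).take (k - n) := by
          rw [List.drop_take, hB1]
        rw [← this]; exact List.drop_suffix _ _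
      have hbb2 : (u₂.take k).take (k - n) <:+ u₂.take k := by
        have : (u₂.take k).drop n = (u₂.take k).take (k - n) := by
          rw [List.drop_take, hB2]
        rw [← this]; exact List.drop_suffix _ _
      have hdd : (u₁.take k).drop (k - n) = (u₂.take k).drop (k - n) := by
        rw [← hB1, ← hB2, List.drop_drop, List.drop_drop]
        have e : n + (k - n) = k := by omega
        rw [e, hd]
      exact ih (k - n) (by omega) (u₁.take k) (u₂.take k) hbb1 hbb2
        (by omega) (by omega) hdd

/-- Key step: with `k₁ ≤ k₂`, equal charged vertices give a contradiction. -/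
lemma key_type2 {σ : ℕ} (V : Finset (List (Fin σ)))
    (hsuf : ∀ s ∈ V, ∀ t : List (Fin σ), t <:+ s → t ∈ V)
    (u₁ u₂ : List (Fin σ)) (a₁ : Fin σ) (hu₂ : u₂ ∈ V)
    (k₁ k₂ : ℕ) (hpos₁ : 0 < k₁) (hlt₁ : k₁ < u₁.length) (hlt₂ : k₂ < u₂.length)
    (hbord₁ : u₁.take k₁ <:+ u₁) (hbord₂ : u₂.take k₂ <:+ u₂)
    (hget₁ : u₁[u₁.length - k₁ - 1]? = some a₁)
    (htype₁ : (a₁ :: u₁) ∉ V)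
    (hne : (u₁, u₁.take k₁) ≠ (u₂, u₂.take k₂))
    (hle : k₁ ≤ k₂) (heq : u₁.drop k₁ = u₂.drop k₂) : False := by
  have hlen : u₁.length - k₁ = u₂.length - k₂ := by
    have := congrArg List.length heq
    simp only [List.length_drop] at this
    omega
  have hs1 : u₁.take k₁ = u₁.drop (u₁.length - k₁) := by
    have := List.suffix_iff_eq_drop.mp hbord₁
    rwa [List.length_take, min_eq_left hlt₁.le] at this
  have hs2 : u₂.take k₂ = u₂.drop (u₂.length - k₂) := by
    have := List.suffix_iff_eq_drop.mp hbord₂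
    rwa [List.length_take, min_eq_left hlt₂.le] at this
  -- the border of u₁ is preceded by a₁
  have hidx : u₁.length - k₁ - 1 < u₁.length := by omega
  rw [List.getElem?_eq_some_iff] at hget₁
  obtain ⟨hh, hv⟩ := hget₁
  have hconsuf : a₁ :: u₁.take k₁ <:+ u₁ := by
    have hdc : u₁.drop (u₁.length - k₁ - 1)
        = u₁[u₁.length - k₁ - 1] :: u₁.drop (u₁.length - k₁) := by
      have e : u₁.length - k₁ - 1 + 1 = u₁.length - k₁ := by omega
      rw [List.drop_eq_getElem_cons hidx, e]
    have hval : u₁[u₁.length - k₁ - 1] = a₁ := by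
      simpa [List.get_eq_getElem] using hv
    rw [hval, ← hs1] at hdc
    rw [← hdc]
    exact List.drop_suffix _ _
  rcases eq_or_lt_of_le hle with hEq | hLt
  · subst hEq
    have := unique_bordered k₁ u₁ u₂ hbord₁ hbord₂ hlt₁ hlt₂ heq
    exact hne (by rw [this])
  · -- k₁ < k₂ : show a₁ :: u₁ is a suffix of u₂
    set j := k₂ - k₁ - 1 with hj
    have hA : (a₁ :: u₁).take (k₁ + 1) <:+ (a₁ :: u₁) := by
      rw [List.take_succ_cons]
      exact hconsuf.trans (List.suffix_cons a₁ u₁)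
    have hAd : (a₁ :: u₁).drop (k₁ + 1) = u₂.drop k₂ := by
      rw [List.drop_succ_cons]; exact heq
    have hvtake : (u₂.drop j).take (k₁ + 1) = u₂.drop (u₂.length - k₂ + j) := by
      have e1 : (u₂.drop j).take (k₁ + 1) = (u₂.drop j).take (k₂ - j) := by
        congr 1; omega
      rw [e1, ← List.drop_take, hs2, List.drop_drop]
    have hv : (u₂.drop j).take (k₁ + 1) <:+ u₂.drop j := by
      rw [hvtake]
      have e : u₂.drop (u₂.length - k₂ + j) = (u₂.drop j).drop (u₂.length - k₂) := by
        rw [List.drop_drop]; congr 1; omega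
      rw [e]
      exact List.drop_suffix _ _
    have hvd : (u₂.drop j).drop (k₁ + 1) = u₂.drop k₂ := by
      rw [List.drop_drop]; congr 1; omega
    have hlA : k₁ + 1 < (a₁ :: u₁).length := by
      simp only [List.length_cons]; omega
    have hlv : k₁ + 1 < (u₂.drop j).length := by
      rw [List.length_drop]; omega
    have hfin := unique_bordered (k₁ + 1) (a₁ :: u₁) (u₂.drop j)
      hA hv hlA hlv (hAd.trans hvd.symm)
    exact htype₁ (hsuf u₂ hu₂ _ (hfin ▸ List.drop_suffix j u₂))

/-- Membership facts extracted from positivity of `bordPre`. -/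
lemma bordPre_facts {α : Type*} [DecidableEq α] (a : α) (u : List α)
    (h : 0 < bordPre a u) :
    0 < bordPre a u ∧ bordPre a u < u.length ∧ u.take (bordPre a u) <:+ u ∧
      u[u.length - bordPre a u - 1]? = some a := by
  have h2 : bordPre a u ∈ (borders u).filter
      (fun b => u[u.length - b - 1]? = some a) := sup_mem_of_pos _ h
  rw [Finset.mem_filter, borders, Finset.mem_filter, Finset.mem_Ioo] at h2
  exact ⟨h2.1.1.1, h2.1.1.2, h2.1.2, h2.2⟩

/-- two distinct type-2 return arcs of a trie (modelled as a
suffix-closed finite set of reversed labels) are never charged to the same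
vertex. The arc from node u₁ with character a₁ is type 2 when u₁ has no
outgoing trie edge labelled a₁ (i.e. a₁ :: u₁ is not a node), and it is
charged to the vertex u₁.drop (bordPre a₁ u₁). -/
theorem type2_arcs_distinct_charge {σ : ℕ} (V : Finset (List (Fin σ)))
    (hsuf : ∀ s ∈ V, ∀ t : List (Fin σ), t <:+ s → t ∈ V)
    (u₁ u₂ : List (Fin σ)) (a₁ a₂ : Fin σ)
    (hu₁ : u₁ ∈ V) (hu₂ : u₂ ∈ V)
    (hb₁ : 0 < bordPre a₁ u₁) (hb₂ : 0 < bordPre a₂ u₂)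
    (htype₁ : (a₁ :: u₁) ∉ V) (htype₂ : (a₂ :: u₂) ∉ V)
    (hdist : (u₁, u₁.take (bordPre a₁ u₁)) ≠ (u₂, u₂.take (bordPre a₂ u₂))) :
    u₁.drop (bordPre a₁ u₁) ≠ u₂.drop (bordPre a₂ u₂) := by
  
  intro heq
  obtain ⟨hp₁, hl₁, hbo₁, hg₁⟩ := bordPre_facts a₁ u₁ hb₁
  obtain ⟨hp₂, hl₂, hbo₂, hg₂⟩ := bordPre_facts a₂ u₂ hb₂
  rcases le_total (bordPre a₁ u₁) (bordPre a₂ u₂) with h | h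
  · exact key_type2 V hsuf u₁ u₂ a₁ hu₂ _ _ hp₁ hl₁ hl₂ hbo₁ hbo₂ hg₁ htype₁
      hdist h heq
  · exact key_type2 V hsuf u₂ u₁ a₂ hu₁ _ _ hp₂ hl₂ hl₁ hbo₂ hbo₁ hg₂ htype₂
      (Ne.symm hdist) h heq.symm
end

section
/- For any string W over alphabet Σ and any character a, the longest proper border of aW satisfies: bord(aW) = (a|W) + 1 if a|W > 0; otherwise bord(aW) equals 1 if the last character of W equals a (and |W| ≥ 1), and 0 otherwise. Here a|W denotes the length of the longest proper border of W that is preceded by character a when it occurs as a suffix of W. -/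
open List

variable {α : Type*} [DecidableEq α]

lemma singleton_suffix_iff (a : α) (W : List α) : [a] <:+ W ↔ W.getLast? = some a := by
  constructor
  · rintro ⟨u, rfl⟩; simp
  · intro h
    rcases W.eq_nil_or_concat' with rfl | ⟨L, b, rfl⟩
    · simp at h
    · simp at h; exact ⟨L, by simp [h]⟩

lemma cons_suffix_iff' (a : α) (s t : List α) (h : s.length < t.length) :
    (a :: s) <:+ t ↔ s <:+ t ∧ t[t.length - s.length - 1]? = some a := by
  constructor
  · rintro ⟨u, rfl⟩
    refine ⟨⟨u ++ [a], by simp⟩, ?_⟩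
    have h1 : (u ++ a :: s).length - s.length - 1 = u.length := by simp; omega
    rw [h1, List.getElem?_append_right (le_refl _)]
    simp
  · rintro ⟨⟨u, rfl⟩, hg⟩
    rcases u.eq_nil_or_concat' with rfl | ⟨L, b, rfl⟩
    · simp at h
    · have h1 : (L ++ [b] ++ s).length - s.length - 1 = L.length := by simp; omega
      rw [h1] at hg
      have h2 : (L ++ [b] ++ s)[L.length]? = some b := by
        rw [List.append_assoc, List.getElem?_append_right (le_refl _)]
        simp
      rw [h2] at hg
      obtain rfl : b = a := by injection hg
      exact ⟨L, by simp⟩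

lemma mem_borders_cons (W : List α) (a : α) (c : ℕ) :
    c ∈ borders (a :: W) ↔ (c = 1 ∧ W.getLast? = some a) ∨
      ∃ b, c = b + 1 ∧ b ∈ borders W ∧ W[W.length - b - 1]? = some a := by
  simp only [borders, Finset.mem_filter, Finset.mem_Ioo, length_cons]
  constructor
  · rintro ⟨⟨hc0, hcl⟩, hs⟩
    obtain ⟨b, rfl⟩ : ∃ b, c = b + 1 := ⟨c - 1, by omega⟩
    have hbl : b < W.length := by omega
    rw [List.take_succ_cons] at hs
    rcases List.suffix_cons_iff.mp hs with heq | hsuf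
    · injection heq with _ heq'
      have : (W.take b).length = W.length := by rw [heq']
      simp [Nat.min_eq_left hbl.le] at this; omega
    · rcases Nat.eq_zero_or_pos b with rfl | hb0
      · left
        refine ⟨rfl, ?_⟩
        rw [List.take_zero] at hsuf
        exact (singleton_suffix_iff a W).mp hsuf
      · right
        have hlen : (W.take b).length = b := by simp [Nat.min_eq_left hbl.le]
        rw [cons_suffix_iff' a _ _ (by omega)] at hsuf
        rw [hlen] at hsuf
        exact ⟨b, rfl, ⟨⟨hb0, hbl⟩, hsuf.1⟩, hsuf.2⟩
  · rintro (⟨rfl, hl⟩ | ⟨b, rfl, ⟨⟨hb0, hbl⟩, hsuf⟩, hg⟩)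
    · have hW : W ≠ [] := by rintro rfl; simp at hl
      refine ⟨⟨one_pos, by have := List.length_pos_iff.mpr hW; omega⟩, ?_⟩
      rw [List.take_succ_cons, List.take_zero]
      exact List.suffix_cons_iff.mpr (Or.inr ((singleton_suffix_iff a W).mpr hl))
    · refine ⟨⟨Nat.succ_pos b, by omega⟩, ?_⟩
      rw [List.take_succ_cons]
      refine List.suffix_cons_iff.mpr (Or.inr ?_)
      rw [cons_suffix_iff' a _ _ (by simp [Nat.min_eq_left hbl.le]; omega)]
      refine ⟨hsuf, ?_⟩
      rw [List.length_take, Nat.min_eq_left hbl.le]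
      exact hg


/-- the longest border of aW equals a|W + 1 if a|W > 0; otherwise
it is 1 if the last character of W is a, and 0 otherwise. -/
theorem bord_cons (W : List α) (a : α) :
    (0 < bordPre a W → bord (a :: W) = bordPre a W + 1) ∧
    (bordPre a W = 0 →
      bord (a :: W) = if W.getLast? = some a then 1 else 0) := by
  set S := (borders W).filter (fun b => W[W.length - b - 1]? = some a) with hSdef
  have hS : bordPre a W = S.sup id := rfl
  constructor
  · intro hpos
    have hne : S.Nonempty := by
      rw [Finset.nonempty_iff_ne_empty]
      intro he
      rw [hS, he] at hpos; simp at hpos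
    obtain ⟨m, hm, hsup⟩ := S.exists_mem_eq_sup hne id
    obtain ⟨hmb, hmg⟩ := Finset.mem_filter.mp hm
    apply Nat.le_antisymm
    · apply Finset.sup_le
      intro c hc
      rcases (mem_borders_cons W a c).mp hc with ⟨rfl, _⟩ | ⟨b, rfl, hb, hg⟩
      · simp only [id_eq]; omega
      · have : b ≤ S.sup id := Finset.le_sup (f := id) (Finset.mem_filter.mpr ⟨hb, hg⟩)
        rw [← hS] at this
        simp only [id_eq] at this ⊢
        omega
    · have : bordPre a W + 1 ∈ borders (a :: W) := by
        rw [mem_borders_cons]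
        exact Or.inr ⟨m, by rw [hS, hsup]; rfl, hmb, hmg⟩
      exact Finset.le_sup (f := id) this
  · intro h0
    have hSe : ∀ b, b ∉ S := by
      intro b hb
      have h1 : b ≤ S.sup id := Finset.le_sup (f := id) hb
      rw [← hS, h0] at h1
      obtain ⟨hbB, -⟩ := Finset.mem_filter.mp hb
      simp only [borders, Finset.mem_filter, Finset.mem_Ioo] at hbB
      omega
    split_ifs with hlast
    · apply Nat.le_antisymm
      · apply Finset.sup_le
        intro c hc
        rcases (mem_borders_cons W a c).mp hc with ⟨rfl, _⟩ | ⟨b, rfl, hb, hg⟩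
        · exact le_refl 1
        · exact absurd (Finset.mem_filter.mpr ⟨hb, hg⟩) (hSe b)
      · exact Finset.le_sup (f := id) ((mem_borders_cons W a 1).mpr (Or.inl ⟨rfl, hlast⟩))
    · have h1 : bord (a :: W) ≤ 0 := by
        apply Finset.sup_le
        intro c hc
        rcases (mem_borders_cons W a c).mp hc with ⟨rfl, h⟩ | ⟨b, rfl, hb, hg⟩
        · exact absurd h hlast
        · exact absurd (Finset.mem_filter.mpr ⟨hb, hg⟩) (hSe b)
      omega
end

section
/- Let γ(W) = Σ_{b ∈ B(W)} π(W[b+1..|W|]) where B(W) is the set of proper border lengths of W and π assigns each string the product of given per-character probabilities. Then γ satisfies the recursion γ(W) = δ(W)·(1 + γ(B)), where B is the longest proper border of W and δ(W) = π(W[|B|+1..|W|]) (with γ(W) = 0 if W has no border). -/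
open List

variable {α : Type*} [DecidableEq α]

/-- Product of per-character probabilities over a string. -/
def piP (P : α → ℝ) (X : List α) : ℝ := (X.map P).prod

/-- γ(W) = Σ_{b ∈ B(W)} π(W[b+1..|W|]). -/
def gam (P : α → ℝ) (W : List α) [DecidableEq α] : ℝ :=
  ∑ b ∈ borders W, piP P (W.drop b)


lemma mem_borders_take {W : List α} {m b : ℕ} (hm : m ∈ borders W) :
    b ∈ borders (W.take m) ↔ b ∈ borders W ∧ b < m := by
  simp only [borders, Finset.mem_filter, Finset.mem_Ioo] at hm ⊢
  obtain ⟨⟨hm0, hmlen⟩, hmsuf⟩ := hm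
  have hlen : (W.take m).length = m := by simp; omega
  rw [hlen]
  have htake : ∀ c ≤ m, (W.take m).take c = W.take c := by
    intro c hc; rw [List.take_take]; congr 1; omega
  constructor
  · rintro ⟨⟨hb0, hbm⟩, hbsuf⟩
    rw [htake b (le_of_lt hbm)] at hbsuf
    exact ⟨⟨⟨hb0, by omega⟩, hbsuf.trans hmsuf⟩, hbm⟩
  · rintro ⟨⟨⟨hb0, hblen⟩, hbsuf⟩, hbm⟩
    refine ⟨⟨hb0, hbm⟩, ?_⟩
    rw [htake b (le_of_lt hbm)]
    apply List.suffix_of_suffix_length_le hbsuf hmsuf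
    simp; omega

lemma piP_append (P : α → ℝ) (x y : List α) : piP P (x ++ y) = piP P x * piP P y := by
  simp [piP]

/-- γ satisfies γ(W) = δ(W)·(1 + γ(B)) where B is the longest
proper border of W and δ(W) = π(W[|B|+1..|W|]); and γ(W) = 0 if W has no
border. -/
theorem gamma_recursion (P : α → ℝ) (W : List α) :
    ((borders W).Nonempty →
      gam P W = piP P (W.drop (bord W)) * (1 + gam P (W.take (bord W)))) ∧
    (borders W = ∅ → gam P W = 0) := by
  constructor
  · intro hne
    obtain ⟨m, hmmem, hmeq⟩ := Finset.exists_mem_eq_sup (borders W) hne id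
    have hbord : bord W = m := hmeq
    rw [hbord]
    have hmlt : m < W.length ∧ 0 < m := by
      have := hmmem; simp only [borders, Finset.mem_filter, Finset.mem_Ioo] at this; omega
    have hsplit : borders W = insert m (borders (W.take m)) := by
      ext b
      simp only [Finset.mem_insert, mem_borders_take hmmem]
      constructor
      · intro hb
        rcases eq_or_ne b m with h | h
        · exact Or.inl h
        · right; refine ⟨hb, ?_⟩
          have : id b ≤ id m := hmeq ▸ Finset.le_sup (f := id) hb
          simp only [id] at this
          omega
      · rintro (rfl | ⟨hb, _⟩)
        · exact hmmem
        · exact hb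
    have hnotmem : m ∉ borders (W.take m) := by
      rw [mem_borders_take hmmem]; omega
    have hdrop : ∀ b ∈ borders (W.take m), W.drop b = (W.take m).drop b ++ W.drop m := by
      intro b hb
      rw [mem_borders_take hmmem] at hb
      conv_lhs => rw [← List.take_append_drop m W]
      rw [List.drop_append_of_le_length]
      simp; omega
    rw [gam, hsplit, Finset.sum_insert hnotmem]
    have : ∑ b ∈ borders (W.take m), piP P (W.drop b)
        = ∑ b ∈ borders (W.take m), piP P ((W.take m).drop b) * piP P (W.drop m) := by
      apply Finset.sum_congr rfl
      intro b hb
      rw [hdrop b hb, piP_append]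
    rw [this, ← Finset.sum_mul, gam]
    ring
  · intro h
    simp [gam, h]
end
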